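/- Suppose the polynomials g₁,…,g_m, with g_j = x^{α^{(j)}} − Σ_{0 ≤ β < α^{(j)}} c_{j,β} x^β, form a reduced Gröbner basis of an ideal I ⊆ F[x₁,…,x_d] with respect to some monomial order. Then {g₁,…,g_m} is the reduced Gröbner basis of I with respect to every monomial order. -/

import Mathlib

open MvPolynomial

/-- `g` has the form `x^α - ∑_{β < α} c_β x^β` with all `β` strictly below `α` componentwise. -/
def HasLowerForm {F : Type*} [Field F] {d : ℕ} (g : MvPolynomial (Fin d) F)
    (α : Fin d →₀ ℕ) : Prop :=
  ∃ (s : Finset (Fin d →₀ ℕ)) (c : (Fin d →₀ ℕ) → F),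
    (∀ β ∈ s, β ≤ α ∧ β ≠ α) ∧ g = monomial α 1 - ∑ β ∈ s, monomial β (c β)

/-- `δ` is the leading exponent (exponent of the leading monomial) of `p` w.r.t. `m`. -/
def IsLeadExp {F : Type*} [Field F] {d : ℕ} (m : MonomialOrder (Fin d))
    (p : MvPolynomial (Fin d) F) (δ : Fin d →₀ ℕ) : Prop :=
  δ ∈ p.support ∧ ∀ β ∈ p.support, m.toSyn β ≤ m.toSyn δ

/-- `G` is a Gröbner basis of `I` w.r.t. the monomial order `m`. -/
def IsGB {F : Type*} [Field F] {d : ℕ} (m : MonomialOrder (Fin d))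
    (I : Ideal (MvPolynomial (Fin d) F)) (G : Set (MvPolynomial (Fin d) F)) : Prop :=
  G ⊆ (I : Set (MvPolynomial (Fin d) F)) ∧
    ∀ p ∈ I, p ≠ 0 → ∃ g ∈ G, ∃ δg δp, IsLeadExp m g δg ∧ IsLeadExp m p δp ∧ δg ≤ δp

/-- `G` is a reduced Gröbner basis of `I` w.r.t. `m`: a Gröbner basis of monic elements,
no term of any element being divisible by the leading monomial of another element. -/
def IsReducedGB {F : Type*} [Field F] {d : ℕ} (m : MonomialOrder (Fin d))
    (I : Ideal (MvPolynomial (Fin d) F)) (G : Set (MvPolynomial (Fin d) F)) : Prop :=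
  IsGB m I G ∧ ∀ g ∈ G, ∃ δ, IsLeadExp m g δ ∧ coeff δ g = 1 ∧
    ∀ g' ∈ G, g' ≠ g → ∀ β ∈ g.support, ∀ δ', IsLeadExp m g' δ' → ¬ δ' ≤ β

/-- The Gröbner éscalier associated to a (reduced) Gröbner basis `G`:
exponents of the monomials not divisible by any leading monomial of `G`. -/
def escalier {F : Type*} [Field F] {d : ℕ} (m : MonomialOrder (Fin d))
    (G : Set (MvPolynomial (Fin d) F)) : Set (Fin d →₀ ℕ) :=
  {β | ∀ g ∈ G, ∀ δ, IsLeadExp m g δ → ¬ δ ≤ β}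

/-- `α! = α₁!⋯α_d!`. -/
def nfact {d : ℕ} (α : Fin d →₀ ℕ) : ℕ := α.prod fun _ k => k.factorial

/-- The differential operator `D^α = ∂^{α₁}/∂x₁^{α₁} ⋯ ∂^{α_d}/∂x_d^{α_d}`. -/
noncomputable def Dpow (F : Type*) [Field F] {d : ℕ} (α : Fin d →₀ ℕ) :
    Module.End F (MvPolynomial (Fin d) F) :=
  (List.ofFn fun i : Fin d =>
    ((MvPolynomial.pderiv i).toLinearMap : Module.End F (MvPolynomial (Fin d) F)) ^ α i).prod

section Aux

variable {F : Type*} [Field F] {d : ℕ}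

lemma leadExp_unique {m : MonomialOrder (Fin d)} {p : MvPolynomial (Fin d) F}
    {δ δ' : Fin d →₀ ℕ} (h : IsLeadExp m p δ) (h' : IsLeadExp m p δ') : δ = δ' :=
  m.toSyn.injective (le_antisymm (h'.2 δ h.1) (h.2 δ' h'.1))

lemma leadExp_exists {m : MonomialOrder (Fin d)} {p : MvPolynomial (Fin d) F} (hp : p ≠ 0) :
    ∃ δ, IsLeadExp m p δ := by
  obtain ⟨δ, hδ, hmax⟩ :=
    p.support.exists_max_image m.toSyn (MvPolynomial.support_nonempty.mpr hp)
  exact ⟨δ, hδ, hmax⟩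

lemma lowerForm_mul {g0 : MvPolynomial (Fin d) F} {α : Fin d →₀ ℕ}
    (h : HasLowerForm g0 α) (ν : Fin d →₀ ℕ) (e : F) :
    coeff (ν + α) (monomial ν e * g0) = e ∧
      ∀ γ, coeff γ (monomial ν e * g0) ≠ 0 → γ ≤ ν + α := by
  classical
  obtain ⟨s, c, hs, rfl⟩ := h
  have hexp : monomial ν e * ((monomial α 1 : MvPolynomial (Fin d) F)
      - ∑ β ∈ s, monomial β (c β))
      = monomial (ν + α) e - ∑ β ∈ s, monomial (ν + β) (e * c β) := by
    rw [mul_sub, Finset.mul_sum, monomial_mul, mul_one]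
    exact congrArg _ (Finset.sum_congr rfl fun β _ => monomial_mul ..)
  rw [hexp]
  constructor
  · rw [coeff_sub, coeff_monomial, if_pos rfl, coeff_sum, Finset.sum_eq_zero, sub_zero]
    intro β hβ
    rw [coeff_monomial, if_neg]
    exact fun hc => (hs β hβ).2 (add_left_cancel hc)
  · intro γ hγ
    rw [coeff_sub, coeff_sum] at hγ
    by_cases h1 : ν + α = γ
    · exact h1 ▸ le_rfl
    · rw [coeff_monomial, if_neg h1, zero_sub, neg_ne_zero] at hγ
      obtain ⟨β, hβ, hβne⟩ := Finset.exists_ne_zero_of_sum_ne_zero hγ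
      rw [coeff_monomial] at hβne
      by_cases h2 : ν + β = γ
      · exact h2 ▸ add_le_add_right (hs β hβ).1 ν
      · rw [if_neg h2] at hβne; exact absurd rfl hβne

lemma lowerForm_leadExp {m : MonomialOrder (Fin d)} {g0 : MvPolynomial (Fin d) F}
    {α : Fin d →₀ ℕ} (h : HasLowerForm g0 α) : IsLeadExp m g0 α ∧ coeff α g0 = 1 := by
  have h2 := lowerForm_mul h 0 (1 : F)
  simp only [monomial_zero', C_1, one_mul, zero_add] at h2
  refine ⟨⟨mem_support_iff.mpr (by rw [h2.1]; exact one_ne_zero), ?_⟩, h2.1⟩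
  intro β hβ
  exact m.toSyn_monotone (h2.2 β (mem_support_iff.mp hβ))

end Aux

/-- If the `g_j = x^{α_j} - (lower order terms)` form a reduced Gröbner basis of `I`
w.r.t. some monomial order, then they form the reduced Gröbner basis of `I` w.r.t.
every monomial order (a universal reduced Gröbner basis). -/
theorem stmt5 {F : Type*} [Field F] [CharZero F] {d M : ℕ}
    (I : Ideal (MvPolynomial (Fin d) F))
    (g : Fin M → MvPolynomial (Fin d) F) (α : Fin M → (Fin d →₀ ℕ))
    (hform : ∀ j, HasLowerForm (g j) (α j))
    (m₀ : MonomialOrder (Fin d)) (hGB : IsReducedGB m₀ I (Set.range g)) :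
    ∀ m : MonomialOrder (Fin d), IsReducedGB m I (Set.range g) := by
  classical
  intro m
  obtain ⟨⟨hsub, hGBmain⟩, hred⟩ := hGB
  -- every nonzero element of I has a support exponent divisible by some α j
  have hdiv : ∀ p ∈ I, p ≠ 0 → ∃ β ∈ p.support, ∃ j, α j ≤ β := by
    intro p hp hp0
    obtain ⟨g', hg', δg, δp, hδg, hδp, hle⟩ := hGBmain p hp hp0
    obtain ⟨j, rfl⟩ := hg'
    have hδgα : δg = α j := leadExp_unique hδg (lowerForm_leadExp (m := m₀) (hform j)).1
    exact ⟨δp, hδp.1, j, hδgα ▸ hle⟩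
  -- key: the m-leading exponent of any nonzero element of I is divisible by some α j
  have key : ∀ s : m.syn, ∀ p ∈ I, p ≠ 0 →
      (∀ γ ∈ p.support, (∃ j, α j ≤ γ) → m.toSyn γ ≤ s) →
      ∀ δ, IsLeadExp m p δ → ∃ j, α j ≤ δ := by
    intro s
    induction s using WellFoundedLT.induction with
    | _ s IH =>
    intro p hp hp0 hbd δ hδ
    by_contra hndiv
    push_neg at hndiv
    set D := p.support.filter (fun γ => ∃ j, α j ≤ γ) with hD
    have hDne : D.Nonempty := by
      obtain ⟨β, hβ, j, hj⟩ := hdiv p hp hp0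
      exact ⟨β, Finset.mem_filter.mpr ⟨hβ, j, hj⟩⟩
    obtain ⟨β, hβD, hβmax⟩ := D.exists_max_image m.toSyn hDne
    obtain ⟨hβsupp, j, hj⟩ := Finset.mem_filter.mp hβD
    set ν := β - α j with hν
    have hνα : ν + α j = β := tsub_add_cancel_of_le hj
    set e := coeff β p with he
    set r := monomial ν e * g j with hr
    obtain ⟨hre, hrsupp⟩ := lowerForm_mul (hform j) ν e
    rw [hνα] at hre hrsupp
    set q := p - r with hq
    have hqI : q ∈ I := I.sub_mem hp (I.mul_mem_left _ (hsub (Set.mem_range_self j)))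
    have hβδ : m.toSyn β ≤ m.toSyn δ := hδ.2 β hβsupp
    have hδβ : δ ≠ β := fun h => hndiv j (h ▸ hj)
    have hcoeffδr : coeff δ r = 0 := by
      by_contra hc
      have hlt : m.toSyn δ < m.toSyn β :=
        lt_of_le_of_ne (m.toSyn_monotone (hrsupp δ hc))
          (fun h => hδβ (m.toSyn.injective h))
      exact not_le_of_gt hlt hβδ
    have hcoeffδq : coeff δ q = coeff δ p := by
      rw [hq, coeff_sub, hcoeffδr, sub_zero]
    have hδp0 : coeff δ p ≠ 0 := mem_support_iff.mp hδ.1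
    have hq0 : q ≠ 0 := fun h => hδp0 (by rw [← hcoeffδq, h, coeff_zero])
    have hβq : coeff β q = 0 := by rw [hq, coeff_sub, hre, ← he, sub_self]
    have hsuppq : ∀ γ ∈ q.support, γ ∈ p.support ∨ (γ ≤ β ∧ γ ≠ β) := by
      intro γ hγ
      have hγβ : γ ≠ β := fun h => (mem_support_iff.mp hγ) (h ▸ hβq)
      rw [mem_support_iff, hq, coeff_sub] at hγ
      by_cases hcp : coeff γ p ≠ 0
      · exact Or.inl (mem_support_iff.mpr hcp)
      · push_neg at hcp
        rw [hcp, zero_sub, neg_ne_zero] at hγ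
        exact Or.inr ⟨hrsupp γ hγ, hγβ⟩
    have hleadq : IsLeadExp m q δ := by
      refine ⟨mem_support_iff.mpr (by rw [hcoeffδq]; exact hδp0), ?_⟩
      intro γ hγ
      rcases hsuppq γ hγ with h | ⟨h1, _⟩
      · exact hδ.2 γ h
      · exact le_trans (m.toSyn_monotone h1) hβδ
    have hqdiv : ∀ γ ∈ q.support, (∃ j', α j' ≤ γ) → m.toSyn γ < m.toSyn β := by
      intro γ hγ hdivγ
      have hγβ : γ ≠ β := fun h => (mem_support_iff.mp hγ) (h ▸ hβq)
      rcases hsuppq γ hγ with h | ⟨h1, h2⟩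
      · exact lt_of_le_of_ne (hβmax γ (Finset.mem_filter.mpr ⟨h, hdivγ⟩))
          (fun h' => hγβ (m.toSyn.injective h'))
      · exact lt_of_le_of_ne (m.toSyn_monotone h1) (fun h' => h2 (m.toSyn.injective h'))
    obtain ⟨β', hβ'supp, j', hj'⟩ := hdiv q hqI hq0
    set D' := q.support.filter (fun γ => ∃ j'', α j'' ≤ γ) with hD'
    have hD'ne : D'.Nonempty := ⟨β', Finset.mem_filter.mpr ⟨hβ'supp, j', hj'⟩⟩
    obtain ⟨βq, hβqD, hβqmax⟩ := D'.exists_max_image m.toSyn hD'ne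
    obtain ⟨hβqsupp, hβqdiv⟩ := Finset.mem_filter.mp hβqD
    have hs' : m.toSyn βq < s :=
      lt_of_lt_of_le (hqdiv βq hβqsupp hβqdiv) (hbd β hβsupp ⟨j, hj⟩)
    obtain ⟨j0, hj0⟩ := IH (m.toSyn βq) hs' q hqI hq0
      (fun γ hγ hγd => hβqmax γ (Finset.mem_filter.mpr ⟨hγ, hγd⟩)) δ hleadq
    exact hndiv j0 hj0
  have keyfinal : ∀ p ∈ I, p ≠ 0 → ∀ δ, IsLeadExp m p δ → ∃ j, α j ≤ δ := by
    intro p hp hp0 δ hδ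
    exact key (m.toSyn δ) p hp hp0 (fun γ hγ _ => hδ.2 γ hγ) δ hδ
  refine ⟨⟨hsub, ?_⟩, ?_⟩
  · intro p hp hp0
    obtain ⟨δ, hδ⟩ := leadExp_exists (m := m) hp0
    obtain ⟨j, hj⟩ := keyfinal p hp hp0 δ hδ
    exact ⟨g j, Set.mem_range_self j, α j, δ, (lowerForm_leadExp (hform j)).1, hδ, hj⟩
  · intro gj hgj
    obtain ⟨j, rfl⟩ := hgj
    refine ⟨α j, (lowerForm_leadExp (hform j)).1, (lowerForm_leadExp (m := m) (hform j)).2, ?_⟩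
    intro g' hg' hne β hβ δ' hδ'
    obtain ⟨δ₀, _, _, hδ₀nd⟩ := hred (g j) (Set.mem_range_self j)
    obtain ⟨k, rfl⟩ := hg'
    have hδ'α : δ' = α k := leadExp_unique hδ' (lowerForm_leadExp (hform k)).1
    have := hδ₀nd (g k) (Set.mem_range_self k) hne β hβ (α k)
      (lowerForm_leadExp (m := m₀) (hform k)).1
    exact hδ'α ▸ this
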